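/- (Heavy/light decomposition for the triangle query; Example 4.2) Let A, B, C be types, let R ⊆ A×B, S ⊆ B×C, T ⊆ A×C be finite relations, and let τ > 0 be a real number. For b ∈ B write R[b] = {a ∈ A : (a,b) ∈ R} and S[b] = {c ∈ C : (b,c) ∈ S}. Define D = { b ∈ B : |R[b]| > τ } (the heavy join keys) and G = { (a,b) ∈ R : b ∉ D }. Let J = { (a,b,c) : (a,b) ∈ R, (b,c) ∈ S, (a,c) ∈ T }. Then: (i) J ⊆ X ∪ Y where X = { (a,b,c) : b ∈ D, (a,c) ∈ T } and Y = { (a,b,c) : (a,b) ∈ G, (b,c) ∈ S }, and X and Y are disjoint; (ii) |D| ≤ |R|/τ, hence |X| ≤ |R|·|T|/τ; (iii) |Y| ≤ τ·|S|; consequently |J| ≤ |R|·|T|/τ + τ·|S|. -/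

import Mathlib

/-- **Heavy/light decomposition for the triangle query** (Example 4.2).
`R ⊆ A×B`, `S ⊆ B×C`, `T ⊆ A×C` are finite relations and `τ > 0`.
`D` is the set of heavy join keys `b` (those with `|R[b]| > τ`),
`G` the light part of `R`, `J` the triangle join, `X = D × T` and
`Y = G ⋈ S`.  Then `J ⊆ X ∪ Y` with `X, Y` disjoint, `|D| ≤ |R|/τ`,
`|X| ≤ |R|·|T|/τ`, `|Y| ≤ τ·|S|`, and consequently
`|J| ≤ |R|·|T|/τ + τ·|S|`. -/
theorem triangle_heavy_light_decomposition
    {A B C : Type*}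
    (R : Finset (A × B)) (S : Finset (B × C)) (T : Finset (A × C))
    (τ : ℝ) (hτ : 0 < τ)
    (D : Set B) (hD : D = {b : B | τ < (Nat.card {a : A | (a, b) ∈ R} : ℝ)})
    (G : Set (A × B)) (hG : G = {p : A × B | p ∈ R ∧ p.2 ∉ D})
    (J X Y : Set (A × B × C))
    (hJ : J = {p : A × B × C |
      (p.1, p.2.1) ∈ R ∧ (p.2.1, p.2.2) ∈ S ∧ (p.1, p.2.2) ∈ T})
    (hX : X = {p : A × B × C | p.2.1 ∈ D ∧ (p.1, p.2.2) ∈ T})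
    (hY : Y = {p : A × B × C | (p.1, p.2.1) ∈ G ∧ (p.2.1, p.2.2) ∈ S}) :
    -- (i)
    (J ⊆ X ∪ Y) ∧ Disjoint X Y ∧
    -- (ii)
    D.Finite ∧ (Nat.card D : ℝ) ≤ (R.card : ℝ) / τ ∧
    X.Finite ∧ (Nat.card X : ℝ) ≤ (R.card : ℝ) * (T.card : ℝ) / τ ∧
    -- (iii)
    Y.Finite ∧ (Nat.card Y : ℝ) ≤ τ * (S.card : ℝ) ∧
    J.Finite ∧ (Nat.card J : ℝ) ≤ (R.card : ℝ) * (T.card : ℝ) / τ + τ * (S.card : ℝ) := by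
  classical
  -- section finsets
  set Rb : B → Finset A := fun b => (R.filter (fun p => p.2 = b)).image Prod.fst with hRb
  have hRbmem : ∀ a b, a ∈ Rb b ↔ (a, b) ∈ R := by
    intro a b
    simp only [hRb, Finset.mem_image, Finset.mem_filter]
    constructor
    · rintro ⟨⟨a', b'⟩, ⟨hm, rfl⟩, rfl⟩; exact hm
    · intro h; exact ⟨(a, b), ⟨h, rfl⟩, rfl⟩
  have hcard : ∀ b : B, (Nat.card {a : A | (a, b) ∈ R}) = (Rb b).card := by
    intro b
    have : {a : A | (a, b) ∈ R} = ↑(Rb b) := by ext a; simp [hRbmem]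
    rw [this, Nat.card_coe_set_eq, Set.ncard_coe_finset]
  have hD' : D = {b : B | τ < ((Rb b).card : ℝ)} := by
    rw [hD]; simp only [hcard]
  -- heavy keys as a finset
  set DF : Finset B := (R.image Prod.snd).filter (fun b => τ < ((Rb b).card : ℝ)) with hDF
  have hDeq : D = ↑DF := by
    rw [hD']; ext b
    simp only [hDF, Finset.coe_filter, Set.mem_setOf_eq, Finset.mem_image]
    constructor
    · intro h
      refine ⟨?_, h⟩
      have hpos : 0 < (Rb b).card := by
        by_contra hc
        push_neg at hc
        interval_cases h' : (Rb b).card <;> simp_all <;> linarith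
      obtain ⟨a, ha⟩ := Finset.card_pos.mp hpos
      exact ⟨(a, b), (hRbmem a b).mp ha, rfl⟩
    · exact fun h => h.2
  have hDmem : ∀ b, b ∈ D ↔ b ∈ DF := by intro b; rw [hDeq]; simp
  -- card of section = card of fiber
  have hfib : ∀ b : B, (Rb b).card = (R.filter (fun p => p.2 = b)).card := by
    intro b
    apply Finset.card_image_of_injOn
    rintro ⟨a1, b1⟩ h1 ⟨a2, b2⟩ h2 h
    simp only [Finset.mem_coe, Finset.mem_filter] at h1 h2
    simp only [Prod.mk.injEq] at *
    exact ⟨h, h1.2.trans h2.2.symm⟩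
  -- key counting: heavy fibers sum to at most |R|
  have hsum : ∑ b ∈ DF, (Rb b).card ≤ R.card := by
    simp only [hfib]
    calc ∑ b ∈ DF, (R.filter (fun p => p.2 = b)).card
        = ∑ b ∈ DF, ((R.filter (fun p => p.2 ∈ DF)).filter (fun p => p.2 = b)).card := by
          apply Finset.sum_congr rfl
          intro b hb
          congr 1
          ext p
          simp only [Finset.mem_filter]
          constructor
          · rintro ⟨hp, rfl⟩; exact ⟨⟨hp, hb⟩, rfl⟩
          · rintro ⟨⟨hp, _⟩, rfl⟩; exact ⟨hp, rfl⟩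
      _ = (R.filter (fun p => p.2 ∈ DF)).card := by
          rw [← Finset.card_eq_sum_card_fiberwise (f := Prod.snd) (t := DF)]
          intro p hp
          exact (Finset.mem_filter.mp hp).2
      _ ≤ R.card := Finset.card_le_card (Finset.filter_subset _ _)
  have hDbound : (DF.card : ℝ) ≤ (R.card : ℝ) / τ := by
    rw [le_div_iff₀ hτ]
    calc (DF.card : ℝ) * τ = ∑ _b ∈ DF, τ := by
          rw [Finset.sum_const, nsmul_eq_mul]
      _ ≤ ∑ b ∈ DF, ((Rb b).card : ℝ) := by
          apply Finset.sum_le_sum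
          intro b hb
          exact le_of_lt (Finset.mem_filter.mp hb).2
      _ = ((∑ b ∈ DF, (Rb b).card : ℕ) : ℝ) := by rw [Nat.cast_sum]
      _ ≤ (R.card : ℝ) := by exact_mod_cast hsum
  -- X as a finset
  set XF : Finset (A × B × C) := (DF ×ˢ T).image (fun q => (q.2.1, q.1, q.2.2)) with hXF
  have hXeq : X = ↑XF := by
    rw [hX]; ext ⟨a, b, c⟩
    simp only [hXF, Finset.coe_image, Set.mem_image, Finset.mem_coe, Finset.mem_product,
      Set.mem_setOf_eq, hDmem]
    constructor
    · rintro ⟨hb, ht⟩; exact ⟨(b, (a, c)), ⟨hb, ht⟩, rfl⟩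
    · rintro ⟨⟨b', a', c'⟩, ⟨hb, ht⟩, h⟩
      simp only [Prod.mk.injEq] at h
      obtain ⟨rfl, rfl, rfl⟩ := h
      exact ⟨hb, ht⟩
  have hXcard : (XF.card : ℝ) ≤ (R.card : ℝ) * (T.card : ℝ) / τ := by
    have h1 : XF.card ≤ DF.card * T.card := by
      calc XF.card ≤ (DF ×ˢ T).card := Finset.card_image_le
        _ = DF.card * T.card := Finset.card_product _ _
    calc (XF.card : ℝ) ≤ (DF.card : ℝ) * (T.card : ℝ) := by exact_mod_cast h1
      _ ≤ ((R.card : ℝ) / τ) * (T.card : ℝ) := by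
          apply mul_le_mul_of_nonneg_right hDbound (by positivity)
      _ = (R.card : ℝ) * (T.card : ℝ) / τ := by ring
  -- Y as a finset
  set YF : Finset (A × B × C) :=
    ((R ×ˢ S).filter (fun q => q.1.2 = q.2.1 ∧ q.1.2 ∉ DF)).image
      (fun q => (q.1.1, q.1.2, q.2.2)) with hYF
  have hYeq : Y = ↑YF := by
    rw [hY, hG]; ext ⟨a, b, c⟩
    simp only [hYF, Finset.coe_image, Set.mem_image, Finset.mem_coe, Finset.mem_filter,
      Finset.mem_product, Set.mem_setOf_eq, hDmem]
    constructor
    · rintro ⟨⟨hr, hnd⟩, hs⟩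
      exact ⟨((a, b), (b, c)), ⟨⟨hr, hs⟩, rfl, hnd⟩, rfl⟩
    · rintro ⟨⟨⟨a', b'⟩, ⟨b'', c'⟩⟩, ⟨⟨hr, hs⟩, heq, hnd⟩, h⟩
      simp only [Prod.mk.injEq] at h heq
      obtain ⟨rfl, rfl, rfl⟩ := h
      subst heq
      exact ⟨⟨hr, hnd⟩, hs⟩
  have hYmem : ∀ p : A × B × C, p ∈ YF ↔
      ((p.1, p.2.1) ∈ R ∧ p.2.1 ∉ DF) ∧ (p.2.1, p.2.2) ∈ S := by
    intro p
    have := hYeq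
    rw [hY, hG] at this
    have h2 : p ∈ Y ↔ p ∈ (↑YF : Set _) := by rw [hYeq]
    rw [hY, hG] at h2
    simpa [hDmem] using h2.symm
  have hYcard : (YF.card : ℝ) ≤ τ * (S.card : ℝ) := by
    have hmap : ∀ p ∈ YF, (p.2.1, p.2.2) ∈ S := fun p hp => ((hYmem p).mp hp).2
    have hfibw := Finset.card_eq_sum_card_fiberwise (f := fun p : A × B × C => (p.2.1, p.2.2))
      (t := S) hmap
    have hterm : ∀ q ∈ S, ((YF.filter (fun p => (p.2.1, p.2.2) = q)).card : ℝ) ≤ τ := by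
      rintro ⟨b, c⟩ hq
      set F := YF.filter (fun p => (p.2.1, p.2.2) = (b, c)) with hF
      rcases F.eq_empty_or_nonempty with he | ⟨p0, hne⟩
      · rw [he]; simpa using le_of_lt hτ
      · have hne' := Finset.mem_filter.mp hne
        have hmem0 := (hYmem p0).mp hne'.1
        have hb0 : p0.2.1 = b := congrArg Prod.fst hne'.2
        have hnd : b ∉ DF := by rw [← hb0]; exact hmem0.1.2
        have hrb : (p0.1, b) ∈ R := by rw [← hb0]; exact hmem0.1.1
        have hlight : ¬ τ < ((Rb b).card : ℝ) := by
          intro hlt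
          exact hnd (Finset.mem_filter.mpr
            ⟨Finset.mem_image.mpr ⟨(p0.1, b), hrb, rfl⟩, hlt⟩)
        push_neg at hlight
        refine le_trans ?_ hlight
        have hsub : F.image Prod.fst ⊆ Rb b := by
          intro a ha
          obtain ⟨p', hp, rfl⟩ := Finset.mem_image.mp ha
          have hp' := Finset.mem_filter.mp hp
          have hm := (hYmem p').mp hp'.1
          have hb' : p'.2.1 = b := congrArg Prod.fst hp'.2
          apply (hRbmem p'.1 b).mpr
          rw [← hb']; exact hm.1.1
        have hinj : F.card = (F.image Prod.fst).card := by
          rw [Finset.card_image_of_injOn]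
          rintro ⟨a1, p1⟩ h1 ⟨a2, p2⟩ h2 h
          simp only [Finset.mem_coe, hF, Finset.mem_filter] at h1 h2
          simp only at h
          subst h
          rw [Prod.ext_iff]
          exact ⟨rfl, h1.2.trans h2.2.symm⟩
        rw [hinj]
        exact_mod_cast Finset.card_le_card hsub
    calc (YF.card : ℝ) = ∑ q ∈ S, ((YF.filter (fun p => (p.2.1, p.2.2) = q)).card : ℝ) := by
          rw [hfibw]; push_cast; rfl
      _ ≤ ∑ _q ∈ S, τ := Finset.sum_le_sum hterm
      _ = τ * (S.card : ℝ) := by rw [Finset.sum_const, nsmul_eq_mul, mul_comm]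
  -- (i)
  have hsub : J ⊆ X ∪ Y := by
    rintro ⟨a, b, c⟩ hj
    rw [hJ] at hj
    obtain ⟨hr, hs, ht⟩ := hj
    by_cases hb : b ∈ D
    · left; rw [hX]; exact ⟨hb, ht⟩
    · right; rw [hY, hG]; exact ⟨⟨hr, hb⟩, hs⟩
  have hdisj : Disjoint X Y := by
    rw [Set.disjoint_left]
    rintro ⟨a, b, c⟩ hx hy
    rw [hX] at hx
    rw [hY, hG] at hy
    exact hy.1.2 hx.1
  -- finiteness and cardinalities
  have hDfin : D.Finite := by rw [hDeq]; exact DF.finite_toSet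
  have hXfin : X.Finite := by rw [hXeq]; exact XF.finite_toSet
  have hYfin : Y.Finite := by rw [hYeq]; exact YF.finite_toSet
  have hJfin : J.Finite := (hXfin.union hYfin).subset hsub
  have hDc : (Nat.card D : ℝ) ≤ (R.card : ℝ) / τ := by
    rw [hDeq, Nat.card_coe_set_eq, Set.ncard_coe_finset]
    exact hDbound
  have hXc : (Nat.card X : ℝ) ≤ (R.card : ℝ) * (T.card : ℝ) / τ := by
    rw [hXeq, Nat.card_coe_set_eq, Set.ncard_coe_finset]
    exact hXcard
  have hYc : (Nat.card Y : ℝ) ≤ τ * (S.card : ℝ) := by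
    rw [hYeq, Nat.card_coe_set_eq, Set.ncard_coe_finset]
    exact hYcard
  have hJc : (Nat.card J : ℝ) ≤ (R.card : ℝ) * (T.card : ℝ) / τ + τ * (S.card : ℝ) := by
    have h1 : Nat.card J ≤ Nat.card ↥(X ∪ Y) :=
      Nat.card_mono (hXfin.union hYfin) hsub
    have h2 : Nat.card ↥(X ∪ Y) ≤ Nat.card X + Nat.card Y := by
      rw [Nat.card_coe_set_eq, Nat.card_coe_set_eq, Nat.card_coe_set_eq]
      exact Set.ncard_union_le X Y
    calc (Nat.card J : ℝ) ≤ ((Nat.card X + Nat.card Y : ℕ) : ℝ) := by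
          exact_mod_cast h1.trans h2
      _ = (Nat.card X : ℝ) + (Nat.card Y : ℝ) := by push_cast; rfl
      _ ≤ (R.card : ℝ) * (T.card : ℝ) / τ + τ * (S.card : ℝ) := add_le_add hXc hYc
  exact ⟨hsub, hdisj, hDfin, hDc, hXfin, hXc, hYfin, hYc, hJfin, hJc⟩
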